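/- For nonzero vectors x, y in a Minkowski plane, if x ⊣ λx + y and μy + x ⊣ y, then 0 ≤ λμ ≤ 2. -/

import Mathlib

/-- Birkhoff normality: `x ⊣ y` iff `‖x‖ ≤ ‖x + t • y‖` for all `t`. -/
def BNormal {V : Type*} [NormedAddCommGroup V] [NormedSpace ℝ V] (x y : V) : Prop :=
  ∀ t : ℝ, ‖x‖ ≤ ‖x + t • y‖

/-- If `x ⊣ l • x + y` and `m • y + x ⊣ y`, then `0 ≤ l * m ≤ 2`. -/
theorem stmt9 {V : Type*} [NormedAddCommGroup V] [NormedSpace ℝ V]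
    (hdim : Module.finrank ℝ V = 2) :
    ∀ x y : V, x ≠ 0 → y ≠ 0 → ∀ l m : ℝ,
      BNormal x (l • x + y) → BNormal (m • y + x) y →
      0 ≤ l * m ∧ l * m ≤ 2 := by
  intro x y hx hy l m h1 h2
  have hx' : (0:ℝ) < ‖x‖ := norm_pos_iff.mpr hx
  have hf : ‖x + m • y‖ ≤ ‖x‖ := by
    have h := h2 (-m)
    have e1 : m • y + x + (-m) • y = x := by module
    have e2 : m • y + x = x + m • y := by module
    rw [e1, e2] at h
    exact h
  by_cases hc : 1 - l * m = 0
  · constructor <;> nlinarith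
  · have ht := h1 (m / (1 - l * m))
    have key : x + (m / (1 - l * m)) • (l • x + y)
        = (1 / (1 - l * m)) • (x + m • y) := by
      have hc' : 1 - m * l ≠ 0 := by rwa [mul_comm]
      match_scalars <;> field_simp <;> ring
    rw [key, norm_smul] at ht
    have habs : |1 - l * m| ≤ 1 := by
      have h3 : ‖x‖ ≤ |1 / (1 - l * m)| * ‖x‖ := by
        calc ‖x‖ ≤ ‖(1:ℝ) / (1 - l * m)‖ * ‖x + m • y‖ := ht
        _ ≤ |1 / (1 - l * m)| * ‖x‖ := by
            rw [Real.norm_eq_abs]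
            exact mul_le_mul_of_nonneg_left hf (abs_nonneg _)
      rw [abs_div, abs_one, div_mul_eq_mul_div, le_div_iff₀ (abs_pos.mpr hc)] at h3
      nlinarith [abs_pos.mpr hc]
    rw [abs_le] at habs
    constructor <;> linarith [habs.1, habs.2]
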